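/- Let σ₀ determine a strictly weak, left invariant Riemannian metric on a Hilbertian H-type group M = V ⊕ W. Then for all x, y ∈ V and z₁, z₂ ∈ W one has d_σ(x + z₁, y + z₂) = 0 if and only if x = y. -/

import Mathlib

open scoped RealInnerProductSpace

/-- A Hilbertian H-type group: a real Hilbert space `M` with an orthogonal decomposition
`M = V ⊕ W` into nontrivial closed subspaces, `W` finite dimensional, a continuous
skew-symmetric Lie bracket with `[M,M] ⊆ W`, `[M,W] = 0`, and the map `J` determined by
`⟪J z x, y⟫ = ⟪z, [x,y]⟫` satisfying `J_z ∘ J_z = -‖z‖² id` on `V`. -/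
structure HTypeGroup (M : Type*) [NormedAddCommGroup M] [InnerProductSpace ℝ M]
    [CompleteSpace M] where
  V : Submodule ℝ M
  W : Submodule ℝ M
  V_closed : IsClosed (V : Set M)
  W_closed : IsClosed (W : Set M)
  V_nontrivial : V ≠ ⊥
  W_nontrivial : W ≠ ⊥
  W_findim : FiniteDimensional ℝ ↥W
  orthogonal : ∀ v ∈ V, ∀ w ∈ W, ⟪v, w⟫ = 0
  proj1 : M →L[ℝ] M
  proj2 : M →L[ℝ] M
  proj1_mem : ∀ v : M, proj1 v ∈ V
  proj2_mem : ∀ v : M, proj2 v ∈ W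
  proj_add : ∀ v : M, proj1 v + proj2 v = v
  bracket : M →L[ℝ] M →L[ℝ] M
  bracket_skew : ∀ u v : M, bracket u v = - bracket v u
  bracket_mem_W : ∀ u v : M, bracket u v ∈ W
  bracket_W : ∀ u : M, ∀ w ∈ W, bracket u w = 0
  Jmap : M →L[ℝ] M →L[ℝ] M
  Jmap_mem_V : ∀ z ∈ W, ∀ x ∈ V, Jmap z x ∈ V
  Jmap_inner : ∀ z ∈ W, ∀ x ∈ V, ∀ y ∈ V, ⟪Jmap z x, y⟫ = ⟪z, bracket x y⟫
  Jmap_sq : ∀ z ∈ W, ∀ x ∈ V, Jmap z (Jmap z x) = -(‖z‖ ^ 2) • x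

/-- A continuous, piecewise continuously differentiable curve on `[0,1]`: a continuous
curve together with a derivative function which is the honest derivative away from a
finite exceptional set, and which is interval integrable. -/
structure PC1Curve (M : Type*) [NormedAddCommGroup M] [NormedSpace ℝ M] where
  toFun : ℝ → M
  deriv : ℝ → M
  continuousOn : ContinuousOn toFun (Set.Icc 0 1)
  exc : Set ℝ
  exc_finite : exc.Finite
  hasDeriv : ∀ t ∈ Set.Ioo (0 : ℝ) 1 \ exc, HasDerivAt toFun (deriv t) t
  deriv_integrable : IntervalIntegrable deriv MeasureTheory.volume 0 1

/-- The Riemannian length `ℓ_σ(γ) = ∫₀¹ ‖γ'(t) − (1/2)[γ(t), γ'(t)]‖_{σ₀} dt` of a piecewise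
`C¹` curve, for the left invariant Riemannian metric determined by the inner product `σ`. -/
noncomputable def riemLength {M : Type*} [NormedAddCommGroup M] [InnerProductSpace ℝ M]
    [CompleteSpace M] (H : HTypeGroup M) (σ : M → M → ℝ) (γ : PC1Curve M) : ℝ :=
  ∫ t in (0 : ℝ)..1,
    Real.sqrt (σ (γ.deriv t - (2⁻¹ : ℝ) • H.bracket (γ.toFun t) (γ.deriv t))
      (γ.deriv t - (2⁻¹ : ℝ) • H.bracket (γ.toFun t) (γ.deriv t)))

/-- The geodesic distance `d_σ(p, q)`: the infimum of the Riemannian lengths of continuous,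
piecewise continuously differentiable curves joining `p` to `q`. -/
noncomputable def riemDist {M : Type*} [NormedAddCommGroup M] [InnerProductSpace ℝ M]
    [CompleteSpace M] (H : HTypeGroup M) (σ : M → M → ℝ) (p q : M) : ℝ :=
  sInf {L : ℝ | ∃ γ : PC1Curve M, γ.toFun 0 = p ∧ γ.toFun 1 = q ∧ L = riemLength H σ γ}


section SigmaBasics
variable {M : Type*} [NormedAddCommGroup M] [InnerProductSpace ℝ M]
variable (σ : M → M → ℝ)

lemma sig_add_left (h_bilin : ∀ v : M, IsLinearMap ℝ (σ v) ∧ IsLinearMap ℝ (fun w => σ w v))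
    (a b c : M) : σ (a + b) c = σ a c + σ b c := (h_bilin c).2.map_add a b

lemma sig_smul_left (h_bilin : ∀ v : M, IsLinearMap ℝ (σ v) ∧ IsLinearMap ℝ (fun w => σ w v))
    (t : ℝ) (a c : M) : σ (t • a) c = t * σ a c := by
  have := (h_bilin c).2.map_smul t a; simpa [smul_eq_mul] using this

lemma sig_add_right (h_bilin : ∀ v : M, IsLinearMap ℝ (σ v) ∧ IsLinearMap ℝ (fun w => σ w v))
    (c a b : M) : σ c (a + b) = σ c a + σ c b := (h_bilin c).1.map_add a b

lemma sig_smul_right (h_bilin : ∀ v : M, IsLinearMap ℝ (σ v) ∧ IsLinearMap ℝ (fun w => σ w v))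
    (t : ℝ) (c a : M) : σ c (t • a) = t * σ c a := by
  have := (h_bilin c).1.map_smul t a; simpa [smul_eq_mul] using this

lemma sig_zero_right (h_bilin : ∀ v : M, IsLinearMap ℝ (σ v) ∧ IsLinearMap ℝ (fun w => σ w v))
    (c : M) : σ c 0 = 0 := (h_bilin c).1.map_zero

lemma sig_nonneg (h_bilin : ∀ v : M, IsLinearMap ℝ (σ v) ∧ IsLinearMap ℝ (fun w => σ w v))
    (h_posdef : ∀ v : M, v ≠ 0 → 0 < σ v v) (v : M) : 0 ≤ σ v v := by
  rcases eq_or_ne v 0 with rfl | hv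
  · simp [sig_zero_right σ h_bilin]
  · exact (h_posdef v hv).le

lemma sig_expand (h_bilin : ∀ v : M, IsLinearMap ℝ (σ v) ∧ IsLinearMap ℝ (fun w => σ w v))
    (h_symm : ∀ v w : M, σ v w = σ w v) (s t : ℝ) (u v : M) :
    σ (s • u + t • v) (s • u + t • v)
      = s ^ 2 * σ u u + 2 * (s * t) * σ u v + t ^ 2 * σ v v := by
  simp only [sig_add_left σ h_bilin, sig_add_right σ h_bilin, sig_smul_left σ h_bilin,
    sig_smul_right σ h_bilin]
  rw [h_symm v u]
  ring

lemma sig_cs (h_bilin : ∀ v : M, IsLinearMap ℝ (σ v) ∧ IsLinearMap ℝ (fun w => σ w v))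
    (h_symm : ∀ v w : M, σ v w = σ w v)
    (h_posdef : ∀ v : M, v ≠ 0 → 0 < σ v v) (u v : M) :
    σ u v ^ 2 ≤ σ u u * σ v v := by
  have key : ∀ t : ℝ, 0 ≤ σ u u + 2 * t * σ u v + t ^ 2 * σ v v := by
    intro t
    have h0 : 0 ≤ σ ((1:ℝ) • u + t • v) ((1:ℝ) • u + t • v) :=
      sig_nonneg σ h_bilin h_posdef _
    rw [sig_expand σ h_bilin h_symm] at h0
    nlinarith [h0]
  by_cases hv : σ v v = 0
  · have hb : σ u v = 0 := by
      by_contra hb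
      have h1 := key (-(σ u u + 1) / (2 * σ u v))
      have h2 : 2 * (-(σ u u + 1) / (2 * σ u v)) * σ u v = -(σ u u + 1) := by
        field_simp
      rw [h2, hv] at h1
      nlinarith [h1]
    simp [hb, hv]
  · have hv' : 0 < σ v v :=
      lt_of_le_of_ne (sig_nonneg σ h_bilin h_posdef v) (Ne.symm hv)
    have h1 := key (-(σ u v) / σ v v)
    have h2 : σ u u + 2 * (-(σ u v) / σ v v) * σ u v + (-(σ u v) / σ v v) ^ 2 * σ v v
        = σ u u - σ u v ^ 2 / σ v v := by field_simp; ring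
    rw [h2] at h1
    have := (div_le_iff₀ hv').mp (by linarith : σ u v ^ 2 / σ v v ≤ σ u u)
    linarith [this]

lemma sig_abs_le (h_bilin : ∀ v : M, IsLinearMap ℝ (σ v) ∧ IsLinearMap ℝ (fun w => σ w v))
    (h_symm : ∀ v w : M, σ v w = σ w v)
    (h_posdef : ∀ v : M, v ≠ 0 → 0 < σ v v) (u v : M) :
    |σ u v| ≤ Real.sqrt (σ u u) * Real.sqrt (σ v v) := by
  rw [← Real.sqrt_sq_eq_abs, ← Real.sqrt_mul (sig_nonneg σ h_bilin h_posdef u)]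
  exact Real.sqrt_le_sqrt (sig_cs σ h_bilin h_symm h_posdef u v)

lemma sig_sqrt_combo (h_bilin : ∀ v : M, IsLinearMap ℝ (σ v) ∧ IsLinearMap ℝ (fun w => σ w v))
    (h_symm : ∀ v w : M, σ v w = σ w v)
    (h_posdef : ∀ v : M, v ≠ 0 → 0 < σ v v) (s t : ℝ) (u v : M) :
    Real.sqrt (σ (s • u + t • v) (s • u + t • v))
      ≤ |s| * Real.sqrt (σ u u) + |t| * Real.sqrt (σ v v) := by
  have hu := sig_nonneg σ h_bilin h_posdef u
  have hv := sig_nonneg σ h_bilin h_posdef v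
  have habs := sig_abs_le σ h_bilin h_symm h_posdef u v
  have hb : σ (s • u + t • v) (s • u + t • v)
      ≤ (|s| * Real.sqrt (σ u u) + |t| * Real.sqrt (σ v v)) ^ 2 := by
    rw [sig_expand σ h_bilin h_symm]
    have h1 : s ^ 2 = |s| ^ 2 := (sq_abs s).symm
    have h2 : t ^ 2 = |t| ^ 2 := (sq_abs t).symm
    have h3 : Real.sqrt (σ u u) ^ 2 = σ u u := Real.sq_sqrt hu
    have h4 : Real.sqrt (σ v v) ^ 2 = σ v v := Real.sq_sqrt hv
    have h5 : 2 * (s * t) * σ u v ≤ 2 * (|s| * |t|) * (Real.sqrt (σ u u) * Real.sqrt (σ v v)) := by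
      have : s * t * σ u v ≤ |s * t * σ u v| := le_abs_self _
      rw [abs_mul, abs_mul] at this
      nlinarith [this, habs, abs_nonneg (s*t), abs_nonneg s, abs_nonneg t, mul_nonneg (abs_nonneg s) (abs_nonneg t)]
    nlinarith [h5]
  calc Real.sqrt (σ (s • u + t • v) (s • u + t • v))
      ≤ Real.sqrt ((|s| * Real.sqrt (σ u u) + |t| * Real.sqrt (σ v v)) ^ 2) :=
        Real.sqrt_le_sqrt hb
    _ = |s| * Real.sqrt (σ u u) + |t| * Real.sqrt (σ v v) := by
        rw [Real.sqrt_sq (by positivity)]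

end SigmaBasics
section HType
variable {M : Type*} [NormedAddCommGroup M] [InnerProductSpace ℝ M] [CompleteSpace M]
variable (H : HTypeGroup M)

lemma HT_mem_inter_eq_zero {a : M} (haV : a ∈ H.V) (haW : a ∈ H.W) : a = 0 := by
  have := H.orthogonal a haV a haW
  exact inner_self_eq_zero.mp this

lemma HT_proj1_add {x z : M} (hx : x ∈ H.V) (hz : z ∈ H.W) : H.proj1 (x + z) = x := by
  have hsum := H.proj_add (x + z)
  have h1 : H.proj1 (x + z) - x ∈ H.V := H.V.sub_mem (H.proj1_mem _) hx
  have h2 : H.proj1 (x + z) - x ∈ H.W := by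
    have heq : H.proj1 (x + z) - x = z - H.proj2 (x + z) :=
      sub_eq_sub_iff_add_eq_add.mpr (hsum.trans (add_comm x z))
    rw [heq]
    exact H.W.sub_mem hz (H.proj2_mem _)
  have := HT_mem_inter_eq_zero H h1 h2
  exact sub_eq_zero.mp this

lemma HT_proj1_W {z : M} (hz : z ∈ H.W) : H.proj1 z = 0 := by
  have := HT_proj1_add H H.V.zero_mem hz
  simpa using this

lemma HT_W_eq_zero {a : M} (haW : a ∈ H.W) (h : ∀ z' ∈ H.W, ⟪z', a⟫ = 0) : a = 0 :=
  inner_self_eq_zero.mp (h a haW)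

lemma HT_bracket_W_left {w : M} (hw : w ∈ H.W) (u : M) : H.bracket w u = 0 := by
  rw [H.bracket_skew w u, H.bracket_W u w hw, neg_zero]

lemma HT_J_skew {z : M} (hz : z ∈ H.W) {a b : M} (ha : a ∈ H.V) (hb : b ∈ H.V) :
    ⟪H.Jmap z a, b⟫ = -⟪H.Jmap z b, a⟫ := by
  rw [H.Jmap_inner z hz a ha b hb, H.Jmap_inner z hz b hb a ha, H.bracket_skew a b,
    inner_neg_right]

lemma HT_J_anticomm {z z' : M} (hz : z ∈ H.W) (hz' : z' ∈ H.W) {e : M} (he : e ∈ H.V) :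
    H.Jmap z (H.Jmap z' e) + H.Jmap z' (H.Jmap z e) = (-(2 * ⟪z, z'⟫)) • e := by
  have hsum := H.Jmap_sq (z + z') (H.W.add_mem hz hz') e he
  have h1 : H.Jmap (z + z') e = H.Jmap z e + H.Jmap z' e := by
    rw [map_add]; rfl
  have h2 : ∀ m : M, H.Jmap (z + z') m = H.Jmap z m + H.Jmap z' m := by
    intro m; rw [map_add]; rfl
  rw [h1, h2, map_add, map_add, H.Jmap_sq z hz e he, H.Jmap_sq z' hz' e he] at hsum
  have hn : ‖z + z'‖ ^ 2 = ‖z‖ ^ 2 + 2 * ⟪z, z'⟫ + ‖z'‖ ^ 2 := norm_add_sq_real z z'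
  have key : H.Jmap z (H.Jmap z' e) + H.Jmap z' (H.Jmap z e)
      = (-(‖z + z'‖ ^ 2)) • e - (-(‖z‖ ^ 2)) • e - (-(‖z'‖ ^ 2)) • e := by
    rw [← hsum]; abel
  rw [key, ← sub_smul, ← sub_smul]
  congr 1
  rw [hn]; ring

lemma HT_J_inner_J {z z' : M} (hz : z ∈ H.W) (hz' : z' ∈ H.W) {e : M} (he : e ∈ H.V) :
    ⟪H.Jmap z' e, H.Jmap z e⟫ = ⟪z', z⟫ * ‖e‖ ^ 2 := by
  have hJze : H.Jmap z e ∈ H.V := H.Jmap_mem_V z hz e he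
  have hJz'e : H.Jmap z' e ∈ H.V := H.Jmap_mem_V z' hz' e he
  have hA : ⟪H.Jmap z' e, H.Jmap z e⟫ = -⟪H.Jmap z' (H.Jmap z e), e⟫ :=
    HT_J_skew H hz' he hJze
  have hB : ⟪H.Jmap z e, H.Jmap z' e⟫ = -⟪H.Jmap z (H.Jmap z' e), e⟫ :=
    HT_J_skew H hz he hJz'e
  have hcomm : ⟪H.Jmap z e, H.Jmap z' e⟫ = ⟪H.Jmap z' e, H.Jmap z e⟫ :=
    real_inner_comm _ _
  have hsum : 2 * ⟪H.Jmap z' e, H.Jmap z e⟫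
      = -⟪H.Jmap z (H.Jmap z' e) + H.Jmap z' (H.Jmap z e), e⟫ := by
    rw [inner_add_left]; rw [hcomm] at hB; linarith [hA, hB]
  rw [HT_J_anticomm H hz hz' he, real_inner_smul_left, real_inner_self_eq_norm_sq] at hsum
  have : ⟪z', z⟫ = ⟪z, z'⟫ := real_inner_comm _ _
  rw [this]; linarith [hsum]

lemma HT_bracket_J {z : M} (hz : z ∈ H.W) {e : M} (he : e ∈ H.V) :
    H.bracket e (H.Jmap z e) = (‖e‖ ^ 2) • z := by
  set a := H.bracket e (H.Jmap z e) - (‖e‖ ^ 2) • z with ha_def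
  have haW : a ∈ H.W := H.W.sub_mem (H.bracket_mem_W _ _) (H.W.smul_mem _ hz)
  have hzero : a = 0 := by
    apply HT_W_eq_zero H haW
    intro z' hz'
    rw [ha_def, inner_sub_right, real_inner_smul_right]
    have h1 : ⟪z', H.bracket e (H.Jmap z e)⟫ = ⟪H.Jmap z' e, H.Jmap z e⟫ :=
      (H.Jmap_inner z' hz' e he (H.Jmap z e) (H.Jmap_mem_V z hz e he)).symm
    rw [h1, HT_J_inner_J H hz hz' he]
    ring
  have := sub_eq_zero.mp hzero
  exact this

lemma HT_norm_J {z : M} (hz : z ∈ H.W) {e : M} (he : e ∈ H.V) :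
    ‖H.Jmap z e‖ = ‖z‖ * ‖e‖ := by
  have h := HT_J_inner_J H hz hz he
  rw [real_inner_self_eq_norm_sq, real_inner_self_eq_norm_sq] at h
  have h2 : ‖H.Jmap z e‖ ^ 2 = (‖z‖ * ‖e‖) ^ 2 := by rw [h]; ring
  have h3 : 0 ≤ ‖z‖ * ‖e‖ := mul_nonneg (norm_nonneg z) (norm_nonneg e)
  calc ‖H.Jmap z e‖ = Real.sqrt (‖H.Jmap z e‖ ^ 2) := (Real.sqrt_sq (norm_nonneg _)).symm
    _ = Real.sqrt ((‖z‖ * ‖e‖) ^ 2) := by rw [h2]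
    _ = ‖z‖ * ‖e‖ := Real.sqrt_sq h3

end HType

section B
variable {M : Type*} [NormedAddCommGroup M] [InnerProductSpace ℝ M]
variable (σ : M → M → ℝ)

noncomputable def sigLM (h_bilin : ∀ v : M, IsLinearMap ℝ (σ v) ∧ IsLinearMap ℝ (fun w => σ w v)) :
    M →ₗ[ℝ] M →ₗ[ℝ] ℝ :=
  LinearMap.mk₂ ℝ σ (fun a b c => (h_bilin c).2.map_add a b)
    (fun t a c => by simpa [smul_eq_mul] using (h_bilin c).2.map_smul t a)
    (fun c a b => (h_bilin c).1.map_add a b)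
    (fun t c a => by simpa [smul_eq_mul] using (h_bilin c).1.map_smul t a)

lemma sig_bound (h_bilin : ∀ v : M, IsLinearMap ℝ (σ v) ∧ IsLinearMap ℝ (fun w => σ w v))
    (h_symm : ∀ v w : M, σ v w = σ w v)
    (h_posdef : ∀ v : M, v ≠ 0 → 0 < σ v v)
    {c₀ : ℝ} (hc₀ : 0 < c₀) (h_cont : ∀ v : M, Real.sqrt (σ v v) ≤ c₀ * ‖v‖) (u v : M) :
    |σ u v| ≤ c₀ ^ 2 * ‖u‖ * ‖v‖ := by
  calc |σ u v| ≤ Real.sqrt (σ u u) * Real.sqrt (σ v v) :=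
        sig_abs_le σ h_bilin h_symm h_posdef u v
    _ ≤ (c₀ * ‖u‖) * (c₀ * ‖v‖) := by
        apply mul_le_mul (h_cont u) (h_cont v) (Real.sqrt_nonneg _)
        positivity
    _ = c₀ ^ 2 * ‖u‖ * ‖v‖ := by ring

noncomputable def sigCLM (h_bilin : ∀ v : M, IsLinearMap ℝ (σ v) ∧ IsLinearMap ℝ (fun w => σ w v))
    (h_symm : ∀ v w : M, σ v w = σ w v)
    (h_posdef : ∀ v : M, v ≠ 0 → 0 < σ v v)
    {c₀ : ℝ} (hc₀ : 0 < c₀) (h_cont : ∀ v : M, Real.sqrt (σ v v) ≤ c₀ * ‖v‖) :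
    M →L[ℝ] M →L[ℝ] ℝ :=
  LinearMap.mkContinuous₂ (sigLM σ h_bilin) (c₀ ^ 2)
    (fun u v => by
      simpa [sigLM, Real.norm_eq_abs] using
        sig_bound σ h_bilin h_symm h_posdef hc₀ h_cont u v)

lemma sigCLM_apply (h_bilin : ∀ v : M, IsLinearMap ℝ (σ v) ∧ IsLinearMap ℝ (fun w => σ w v))
    (h_symm : ∀ v w : M, σ v w = σ w v)
    (h_posdef : ∀ v : M, v ≠ 0 → 0 < σ v v)
    {c₀ : ℝ} (hc₀ : 0 < c₀) (h_cont : ∀ v : M, Real.sqrt (σ v v) ≤ c₀ * ‖v‖) (u v : M) :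
    sigCLM σ h_bilin h_symm h_posdef hc₀ h_cont u v = σ u v := rfl

lemma sig_diag_continuous (h_bilin : ∀ v : M, IsLinearMap ℝ (σ v) ∧ IsLinearMap ℝ (fun w => σ w v))
    (h_symm : ∀ v w : M, σ v w = σ w v)
    (h_posdef : ∀ v : M, v ≠ 0 → 0 < σ v v)
    {c₀ : ℝ} (hc₀ : 0 < c₀) (h_cont : ∀ v : M, Real.sqrt (σ v v) ≤ c₀ * ‖v‖) :
    Continuous (fun m : M => σ m m) := by
  have h : Continuous (fun m : M => sigCLM σ h_bilin h_symm h_posdef hc₀ h_cont m m) :=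
    Continuous.clm_apply (sigCLM σ h_bilin h_symm h_posdef hc₀ h_cont).continuous continuous_id
  exact h

end B
section Cheap
variable {M : Type*} [NormedAddCommGroup M] [InnerProductSpace ℝ M] [CompleteSpace M]
variable (H : HTypeGroup M) (σ : M → M → ℝ)

set_option maxHeartbeats 1000000 in
lemma W_lower_bound (h_bilin : ∀ v : M, IsLinearMap ℝ (σ v) ∧ IsLinearMap ℝ (fun w => σ w v))
    (h_symm : ∀ v w : M, σ v w = σ w v)
    (h_posdef : ∀ v : M, v ≠ 0 → 0 < σ v v)
    {c₀ : ℝ} (hc₀ : 0 < c₀) (h_cont : ∀ v : M, Real.sqrt (σ v v) ≤ c₀ * ‖v‖) :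
    ∃ cW > 0, ∀ w ∈ H.W, cW * ‖w‖ ≤ Real.sqrt (σ w w) := by
  haveI := H.W_findim
  haveI : ProperSpace ↥H.W := FiniteDimensional.proper ℝ ↥H.W
  haveI : Nontrivial ↥H.W := Submodule.nontrivial_iff_ne_bot.mpr H.W_nontrivial
  have hcmp : IsCompact (Metric.sphere (0 : ↥H.W) 1) := isCompact_sphere _ _
  have hne : (Metric.sphere (0 : ↥H.W) 1).Nonempty :=
    NormedSpace.sphere_nonempty.mpr zero_le_one
  have hfc : Continuous (fun w : ↥H.W => σ (w : M) (w : M)) :=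
    (sig_diag_continuous σ h_bilin h_symm h_posdef hc₀ h_cont).comp continuous_subtype_val
  obtain ⟨wm, hwm, hmin⟩ := hcmp.exists_isMinOn hne hfc.continuousOn
  have hwm1 : ‖(wm : M)‖ = 1 := by
    exact mem_sphere_zero_iff_norm.mp hwm
  have hwm0 : (wm : M) ≠ 0 := by
    intro h; rw [h] at hwm1; simp at hwm1
  set m := σ (wm : M) (wm : M) with hm_def
  have hm : 0 < m := h_posdef _ hwm0
  refine ⟨Real.sqrt m, Real.sqrt_pos.mpr hm, ?_⟩
  intro w hw
  rcases eq_or_ne w 0 with rfl | hw0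
  · simp [Real.sqrt_nonneg]
  · have hnw : 0 < ‖w‖ := norm_pos_iff.mpr hw0
    set u : ↥H.W := ⟨(‖w‖⁻¹) • w, H.W.smul_mem _ hw⟩ with hu_def
    have hus : u ∈ Metric.sphere (0 : ↥H.W) 1 := by
      rw [mem_sphere_zero_iff_norm]
      show ‖(‖w‖⁻¹) • w‖ = 1
      rw [norm_smul, norm_inv, norm_norm]
      field_simp
    have hmu : m ≤ σ ((u : M)) ((u : M)) := hmin hus
    have hexp : σ ((u : M)) ((u : M)) = ‖w‖⁻¹ ^ 2 * σ w w := by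
      show σ ((‖w‖⁻¹) • w) ((‖w‖⁻¹) • w) = _
      rw [sig_smul_left σ h_bilin, sig_smul_right σ h_bilin]
      ring
    have hσw : ‖w‖ ^ 2 * m ≤ σ w w := by
      rw [hexp] at hmu
      have h2 : ‖w‖ ^ 2 * m ≤ ‖w‖ ^ 2 * (‖w‖⁻¹ ^ 2 * σ w w) := by
        apply mul_le_mul_of_nonneg_left hmu (by positivity)
      calc ‖w‖ ^ 2 * m ≤ ‖w‖ ^ 2 * (‖w‖⁻¹ ^ 2 * σ w w) := h2
        _ = σ w w := by field_simp
    calc Real.sqrt m * ‖w‖ = Real.sqrt (‖w‖ ^ 2 * m) := by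
          rw [Real.sqrt_mul (by positivity), Real.sqrt_sq hnw.le]; ring
      _ ≤ Real.sqrt (σ w w) := Real.sqrt_le_sqrt hσw

lemma cheap_direction (h_bilin : ∀ v : M, IsLinearMap ℝ (σ v) ∧ IsLinearMap ℝ (fun w => σ w v))
    (h_symm : ∀ v w : M, σ v w = σ w v)
    (h_posdef : ∀ v : M, v ≠ 0 → 0 < σ v v)
    {c₀ : ℝ} (hc₀ : 0 < c₀) (h_cont : ∀ v : M, Real.sqrt (σ v v) ≤ c₀ * ‖v‖)
    {C : ℝ} (hC : 0 < C)
    (h_proj : ∀ v : M, Real.sqrt (σ (H.proj1 v) (H.proj1 v)) ≤ C * Real.sqrt (σ v v) ∧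
        Real.sqrt (σ (H.proj2 v) (H.proj2 v)) ≤ C * Real.sqrt (σ v v))
    (h_strictly_weak : ¬ ∃ c > (0 : ℝ), ∀ v : M, c * ‖v‖ ≤ Real.sqrt (σ v v)) :
    ∀ δ > (0 : ℝ), ∃ e, e ∈ H.V ∧ e ≠ 0 ∧ Real.sqrt (σ e e) ≤ δ * ‖e‖ := by
  intro δ hδ
  obtain ⟨cW, hcW, hWlb⟩ := W_lower_bound H σ h_bilin h_symm h_posdef hc₀ h_cont
  push_neg at h_strictly_weak
  set δ' : ℝ := min (cW / (2 * C)) (δ / (2 * C)) with hδ'_def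
  have hδ' : 0 < δ' := lt_min (by positivity) (by positivity)
  obtain ⟨v, hv⟩ := h_strictly_weak δ' hδ'
  have hv0 : v ≠ 0 := by
    intro h; rw [h] at hv; simp at hv
    exact absurd hv (not_lt.mpr (Real.sqrt_nonneg _))
  have hnv : 0 < ‖v‖ := norm_pos_iff.mpr hv0
  set e := H.proj1 v with he_def
  have hσe : Real.sqrt (σ e e) ≤ C * Real.sqrt (σ v v) := (h_proj v).1
  have hσ2 : Real.sqrt (σ (H.proj2 v) (H.proj2 v)) ≤ C * Real.sqrt (σ v v) := (h_proj v).2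
  have hπ2 : ‖H.proj2 v‖ ≤ ‖v‖ / 2 := by
    have h1 : cW * ‖H.proj2 v‖ ≤ Real.sqrt (σ (H.proj2 v) (H.proj2 v)) :=
      hWlb _ (H.proj2_mem v)
    have h2 : cW * ‖H.proj2 v‖ ≤ C * (δ' * ‖v‖) := by
      calc cW * ‖H.proj2 v‖ ≤ C * Real.sqrt (σ v v) := le_trans h1 hσ2
        _ ≤ C * (δ' * ‖v‖) := by
            apply mul_le_mul_of_nonneg_left hv.le hC.le
    have h3 : δ' ≤ cW / (2 * C) := min_le_left _ _
    have : C * (δ' * ‖v‖) ≤ cW * (‖v‖ / 2) := by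
      rw [le_div_iff₀ (by positivity)] at h3
      calc C * (δ' * ‖v‖) = (δ' * (2 * C)) * (‖v‖ / 2) := by ring
        _ ≤ cW * (‖v‖ / 2) := by
            apply mul_le_mul_of_nonneg_right h3 (by positivity)
    have h4 : cW * ‖H.proj2 v‖ ≤ cW * (‖v‖ / 2) := le_trans h2 this
    exact le_of_mul_le_mul_left h4 hcW
  have hne : ‖v‖ / 2 ≤ ‖e‖ := by
    have : ‖v‖ ≤ ‖e‖ + ‖H.proj2 v‖ := by
      calc ‖v‖ = ‖e + H.proj2 v‖ := by rw [H.proj_add v]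
        _ ≤ ‖e‖ + ‖H.proj2 v‖ := norm_add_le _ _
    linarith
  have he0 : e ≠ 0 := by
    intro h; rw [h] at hne; simp at hne; linarith
  refine ⟨e, H.proj1_mem v, he0, ?_⟩
  have h5 : δ' ≤ δ / (2 * C) := min_le_right _ _
  calc Real.sqrt (σ e e) ≤ C * Real.sqrt (σ v v) := hσe
    _ ≤ C * (δ' * ‖v‖) := mul_le_mul_of_nonneg_left hv.le hC.le
    _ ≤ C * ((δ / (2 * C)) * ‖v‖) := by
        apply mul_le_mul_of_nonneg_left (mul_le_mul_of_nonneg_right h5 hnv.le) hC.le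
    _ = (δ / 2) * ‖v‖ := by field_simp
    _ ≤ (δ / 2) * (2 * ‖e‖) := by
        apply mul_le_mul_of_nonneg_left (by linarith) (by positivity)
    _ = δ * ‖e‖ := by ring

end Cheap
section Lower
variable {M : Type*} [NormedAddCommGroup M] [InnerProductSpace ℝ M] [CompleteSpace M]
variable (H : HTypeGroup M) (σ : M → M → ℝ)

lemma bracket_cont2 : Continuous (fun p : M × M => H.bracket p.1 p.2) :=
  (H.bracket.continuous.comp continuous_fst).clm_apply continuous_snd

lemma integrand_integrable
    (h_bilin : ∀ v : M, IsLinearMap ℝ (σ v) ∧ IsLinearMap ℝ (fun w => σ w v))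
    (h_symm : ∀ v w : M, σ v w = σ w v)
    (h_posdef : ∀ v : M, v ≠ 0 → 0 < σ v v)
    {c₀ : ℝ} (hc₀ : 0 < c₀) (h_cont : ∀ v : M, Real.sqrt (σ v v) ≤ c₀ * ‖v‖)
    (γ : PC1Curve M) :
    IntervalIntegrable
      (fun t => Real.sqrt (σ (γ.deriv t - (2⁻¹ : ℝ) • H.bracket (γ.toFun t) (γ.deriv t))
        (γ.deriv t - (2⁻¹ : ℝ) • H.bracket (γ.toFun t) (γ.deriv t)))) MeasureTheory.volume 0 1 ∧
    IntervalIntegrable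
      (fun t => γ.deriv t - (2⁻¹ : ℝ) • H.bracket (γ.toFun t) (γ.deriv t))
        MeasureTheory.volume 0 1 := by
  set D : ℝ → M := fun t => γ.deriv t - (2⁻¹ : ℝ) • H.bracket (γ.toFun t) (γ.deriv t) with hD_def
  have hd : IntervalIntegrable γ.deriv MeasureTheory.volume 0 1 := γ.deriv_integrable
  rw [intervalIntegrable_iff_integrableOn_Ioc_of_le zero_le_one] at hd
  have hγm : MeasureTheory.AEStronglyMeasurable γ.toFun
      (MeasureTheory.volume.restrict (Set.Ioc (0:ℝ) 1)) :=
    (γ.continuousOn.mono Set.Ioc_subset_Icc_self).aestronglyMeasurable measurableSet_Ioc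
  obtain ⟨Kγ, hKγ⟩ := isCompact_Icc.exists_bound_of_continuousOn γ.continuousOn
  have hbrm : MeasureTheory.AEStronglyMeasurable
      (fun t => H.bracket (γ.toFun t) (γ.deriv t))
      (MeasureTheory.volume.restrict (Set.Ioc (0:ℝ) 1)) :=
    (bracket_cont2 H).comp_aestronglyMeasurable (hγm.prodMk hd.aestronglyMeasurable)
  have hbr : MeasureTheory.IntegrableOn
      (fun t => H.bracket (γ.toFun t) (γ.deriv t)) (Set.Ioc (0:ℝ) 1) := by
    apply MeasureTheory.Integrable.mono' ((hd.norm.const_mul (‖H.bracket‖ * Kγ))) hbrm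
    filter_upwards [MeasureTheory.ae_restrict_mem measurableSet_Ioc] with t ht
    calc ‖H.bracket (γ.toFun t) (γ.deriv t)‖ ≤ ‖H.bracket‖ * ‖γ.toFun t‖ * ‖γ.deriv t‖ :=
          H.bracket.le_opNorm₂ _ _
      _ ≤ ‖H.bracket‖ * Kγ * ‖γ.deriv t‖ := by
          have h1 : ‖γ.toFun t‖ ≤ Kγ := hKγ t (Set.Ioc_subset_Icc_self ht)
          exact mul_le_mul_of_nonneg_right
            (mul_le_mul_of_nonneg_left h1 (norm_nonneg H.bracket)) (norm_nonneg _)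
  have hD : MeasureTheory.IntegrableOn D (Set.Ioc (0:ℝ) 1) := hd.sub (hbr.smul (2⁻¹ : ℝ))
  constructor
  · rw [intervalIntegrable_iff_integrableOn_Ioc_of_le zero_le_one]
    have hgm : MeasureTheory.AEStronglyMeasurable (fun t => Real.sqrt (σ (D t) (D t)))
        (MeasureTheory.volume.restrict (Set.Ioc (0:ℝ) 1)) :=
      (Real.continuous_sqrt.comp
        (sig_diag_continuous σ h_bilin h_symm h_posdef hc₀ h_cont)).comp_aestronglyMeasurable
        hD.aestronglyMeasurable
    apply MeasureTheory.Integrable.mono' (hD.norm.const_mul c₀) hgm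
    filter_upwards with t
    rw [Real.norm_eq_abs, abs_of_nonneg (Real.sqrt_nonneg _)]
    exact h_cont (D t)
  · rw [intervalIntegrable_iff_integrableOn_Ioc_of_le zero_le_one]
    exact hD

lemma length_lower_bound
    (h_bilin : ∀ v : M, IsLinearMap ℝ (σ v) ∧ IsLinearMap ℝ (fun w => σ w v))
    (h_symm : ∀ v w : M, σ v w = σ w v)
    (h_posdef : ∀ v : M, v ≠ 0 → 0 < σ v v)
    {c₀ : ℝ} (hc₀ : 0 < c₀) (h_cont : ∀ v : M, Real.sqrt (σ v v) ≤ c₀ * ‖v‖)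
    {C : ℝ} (hC : 0 < C)
    (h_proj : ∀ v : M, Real.sqrt (σ (H.proj1 v) (H.proj1 v)) ≤ C * Real.sqrt (σ v v) ∧
        Real.sqrt (σ (H.proj2 v) (H.proj2 v)) ≤ C * Real.sqrt (σ v v))
    {x y z₁ z₂ : M} (hx : x ∈ H.V) (hy : y ∈ H.V) (hz₁ : z₁ ∈ H.W) (hz₂ : z₂ ∈ H.W)
    (hxy : x ≠ y) (γ : PC1Curve M)
    (hγ0 : γ.toFun 0 = x + z₁) (hγ1 : γ.toFun 1 = y + z₂) :
    Real.sqrt (σ (x - y) (x - y)) / C ≤ riemLength H σ γ := by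
  set u := x - y with hu_def
  have hu0 : u ≠ 0 := sub_ne_zero.mpr hxy
  set a := σ u u with ha_def
  have ha : 0 < a := h_posdef u hu0
  set sa := Real.sqrt a with hsa_def
  have hsa : 0 < sa := Real.sqrt_pos.mpr ha
  set D : ℝ → M := fun t => γ.deriv t - (2⁻¹ : ℝ) • H.bracket (γ.toFun t) (γ.deriv t)
    with hD_def
  obtain ⟨hg_int, hD_int⟩ :=
    integrand_integrable H σ h_bilin h_symm h_posdef hc₀ h_cont γ
  -- the continuous linear functional φ
  set φ : M →L[ℝ] ℝ :=
    (sigCLM σ h_bilin h_symm h_posdef hc₀ h_cont u).comp H.proj1 with hφ_def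
  have hφ_apply : ∀ m : M, φ m = σ u (H.proj1 m) := fun m => rfl
  have hφd : IntervalIntegrable (fun t => φ (γ.deriv t)) MeasureTheory.volume 0 1 := by
    constructor
    · exact φ.integrable_comp γ.deriv_integrable.1
    · exact φ.integrable_comp γ.deriv_integrable.2
  -- fundamental theorem of calculus
  have hFTC : ∫ t in (0:ℝ)..1, φ (γ.deriv t) = φ (γ.toFun 1) - φ (γ.toFun 0) := by
    apply MeasureTheory.integral_eq_of_hasDerivAt_off_countable_of_le
      (fun t => φ (γ.toFun t)) (fun t => φ (γ.deriv t)) zero_le_one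
      γ.exc_finite.countable (φ.continuous.comp_continuousOn γ.continuousOn)
      (fun t ht => φ.hasFDerivAt.comp_hasDerivAt t (γ.hasDeriv t ht)) hφd
  -- pointwise bound
  have hpt : ∀ t : ℝ, |φ (γ.deriv t)| ≤ (C * sa) * Real.sqrt (σ (D t) (D t)) := by
    intro t
    have hproj : H.proj1 (γ.deriv t) = H.proj1 (D t) := by
      rw [hD_def]
      simp only [map_sub, map_smul]
      rw [HT_proj1_W H (H.bracket_mem_W _ _)]
      simp
    rw [hφ_apply, hproj]
    calc |σ u (H.proj1 (D t))|
        ≤ Real.sqrt (σ u u) * Real.sqrt (σ (H.proj1 (D t)) (H.proj1 (D t))) :=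
          sig_abs_le σ h_bilin h_symm h_posdef _ _
      _ ≤ sa * (C * Real.sqrt (σ (D t) (D t))) := by
          apply mul_le_mul_of_nonneg_left (h_proj (D t)).1 (Real.sqrt_nonneg _)
      _ = (C * sa) * Real.sqrt (σ (D t) (D t)) := by ring
  -- endpoint computation
  have hend : φ (γ.toFun 1) - φ (γ.toFun 0) = -a := by
    rw [hγ0, hγ1, hφ_apply, hφ_apply, HT_proj1_add H hy hz₂, HT_proj1_add H hx hz₁]
    have := (h_bilin u).1.map_sub y x
    have h2 : σ u y - σ u x = σ u (y - x) := ((h_bilin u).1.map_sub y x).symm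
    rw [ha_def, hu_def]
    have h3 : σ (x - y) (y - x) = -σ (x - y) (x - y) := by
      have h4 : (y - x : M) = -(x - y) := by abel
      rw [h4]
      have := (h_bilin (x - y)).1.map_neg (x - y)
      simpa using this
    linarith [h2, h3]
  -- chain of inequalities
  have habs : a ≤ ∫ t in (0:ℝ)..1, |φ (γ.deriv t)| := by
    have h1 : |∫ t in (0:ℝ)..1, φ (γ.deriv t)| ≤ ∫ t in (0:ℝ)..1, |φ (γ.deriv t)| :=
      intervalIntegral.abs_integral_le_integral_abs zero_le_one
    rw [hFTC, hend] at h1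
    rw [abs_neg, abs_of_pos ha] at h1
    exact h1
  have hmono : ∫ t in (0:ℝ)..1, |φ (γ.deriv t)|
      ≤ (C * sa) * riemLength H σ γ := by
    have h2 : ∫ t in (0:ℝ)..1, |φ (γ.deriv t)|
        ≤ ∫ t in (0:ℝ)..1, (C * sa) * Real.sqrt (σ (D t) (D t)) := by
      apply intervalIntegral.integral_mono_on zero_le_one hφd.abs
        (hg_int.const_mul (C * sa))
      intro t _
      exact hpt t
    rw [intervalIntegral.integral_const_mul] at h2
    exact h2
  have hL : a ≤ (C * sa) * riemLength H σ γ := le_trans habs hmono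
  have hfin : sa / C ≤ riemLength H σ γ := by
    rw [div_le_iff₀ hC]
    have hsa2 : sa * sa = a := Real.mul_self_sqrt ha.le
    nlinarith [hL, hsa, hC]
  exact hfin

end Lower
section Construction
open Real
variable {M : Type*} [NormedAddCommGroup M] [InnerProductSpace ℝ M] [CompleteSpace M]

noncomputable def cHor (e f : M) (R r t : ℝ) : M :=
  (R * Real.sin (2 * π * t)) • e + (r * (1 - Real.cos (2 * π * t))) • f

noncomputable def cHorD (e f : M) (R r t : ℝ) : M :=
  (R * (Real.cos (2 * π * t) * (2 * π))) • e + (r * (Real.sin (2 * π * t) * (2 * π))) • f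

noncomputable def loopFun (H : HTypeGroup M) (p e f w : M) (R r t : ℝ) : M :=
  p + cHor e f R r t + (2⁻¹ : ℝ) • H.bracket p (cHor e f R r t)
    + (2⁻¹ * (R * r) * (2 * π * t - Real.sin (2 * π * t))) • w

noncomputable def loopDeriv (H : HTypeGroup M) (p e f w : M) (R r t : ℝ) : M :=
  cHorD e f R r t + (2⁻¹ : ℝ) • H.bracket p (cHorD e f R r t)
    + (2⁻¹ * (R * r) * (2 * π - Real.cos (2 * π * t) * (2 * π))) • w

lemma theta_hasDeriv (t : ℝ) : HasDerivAt (fun s : ℝ => 2 * π * s) (2 * π) t := by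
  simpa using (hasDerivAt_id t).const_mul (2 * π)

lemma sin_theta_hasDeriv (t : ℝ) :
    HasDerivAt (fun s : ℝ => Real.sin (2 * π * s)) (Real.cos (2 * π * t) * (2 * π)) t :=
  (Real.hasDerivAt_sin (2 * π * t)).comp t (theta_hasDeriv t)

lemma cos_theta_hasDeriv (t : ℝ) :
    HasDerivAt (fun s : ℝ => Real.cos (2 * π * s)) (-Real.sin (2 * π * t) * (2 * π)) t :=
  (Real.hasDerivAt_cos (2 * π * t)).comp t (theta_hasDeriv t)

lemma cHor_hasDeriv (e f : M) (R r t : ℝ) :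
    HasDerivAt (fun s => cHor e f R r s) (cHorD e f R r t) t := by
  unfold cHor cHorD
  apply HasDerivAt.add
  · exact ((sin_theta_hasDeriv t).const_mul R).smul_const e
  · have h2 : HasDerivAt (fun s : ℝ => 1 - Real.cos (2 * π * s))
        (Real.sin (2 * π * t) * (2 * π)) t := by
      simpa using (cos_theta_hasDeriv t).const_sub 1
    exact (h2.const_mul r).smul_const f

lemma cHor_continuous (e f : M) (R r : ℝ) : Continuous (fun t => cHor e f R r t) := by
  unfold cHor; fun_prop

lemma cHorD_continuous (e f : M) (R r : ℝ) : Continuous (fun t => cHorD e f R r t) := by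
  unfold cHorD; fun_prop

lemma loopFun_continuous (H : HTypeGroup M) (p e f w : M) (R r : ℝ) :
    Continuous (fun t => loopFun H p e f w R r t) := by
  unfold loopFun
  refine ((continuous_const.add (cHor_continuous e f R r)).add ?_).add ?_
  · exact ((H.bracket p).continuous.comp (cHor_continuous e f R r)).const_smul _
  · fun_prop

lemma loopDeriv_continuous (H : HTypeGroup M) (p e f w : M) (R r : ℝ) :
    Continuous (fun t => loopDeriv H p e f w R r t) := by
  unfold loopDeriv
  refine ((cHorD_continuous e f R r).add ?_).add ?_
  · exact ((H.bracket p).continuous.comp (cHorD_continuous e f R r)).const_smul _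
  · fun_prop

lemma loopFun_hasDeriv (H : HTypeGroup M) (p e f w : M) (R r t : ℝ) :
    HasDerivAt (fun s => loopFun H p e f w R r s) (loopDeriv H p e f w R r t) t := by
  unfold loopFun loopDeriv
  have hc := cHor_hasDeriv e f R r t
  have hb : HasDerivAt (fun s => (2⁻¹ : ℝ) • H.bracket p (cHor e f R r s))
      ((2⁻¹ : ℝ) • H.bracket p (cHorD e f R r t)) t :=
    ((H.bracket p).hasFDerivAt.comp_hasDerivAt t hc).const_smul (2⁻¹ : ℝ)
  have hw : HasDerivAt
      (fun s => (2⁻¹ * (R * r) * (2 * π * s - Real.sin (2 * π * s))) • w)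
      ((2⁻¹ * (R * r) * (2 * π - Real.cos (2 * π * t) * (2 * π))) • w) t := by
    have h1 : HasDerivAt (fun s : ℝ => 2 * π * s - Real.sin (2 * π * s))
        (2 * π - Real.cos (2 * π * t) * (2 * π)) t :=
      (theta_hasDeriv t).sub (sin_theta_hasDeriv t)
    exact (h1.const_mul (2⁻¹ * (R * r))).smul_const w
  have h := (((hasDerivAt_const t p).add hc).add hb).add hw
  rw [zero_add] at h
  exact h

lemma loopFun_zero (H : HTypeGroup M) (p e f w : M) (R r : ℝ) :
    loopFun H p e f w R r 0 = p := by
  unfold loopFun cHor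
  simp

lemma loopFun_one (H : HTypeGroup M) (p e f w : M) (R r : ℝ) :
    loopFun H p e f w R r 1 = p + (π * (R * r)) • w := by
  unfold loopFun cHor
  simp [Real.sin_two_pi, Real.cos_two_pi]
  match_scalars <;> ring

lemma HT_bracket_reduce (H : HTypeGroup M) {u v : M} (hu : u ∈ H.W) (hv : v ∈ H.W)
    (A B : M) : H.bracket (A + u) (B + v) = H.bracket A B := by
  rw [map_add, H.bracket_W _ v hv, add_zero]
  rw [map_add, ContinuousLinearMap.add_apply, HT_bracket_W_left H hu B, add_zero]

lemma bracket_cHor (H : HTypeGroup M) (e f : M) (R r t : ℝ) :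
    H.bracket (cHor e f R r t) (cHorD e f R r t)
      = (2 * π * (R * r) * (1 - Real.cos (2 * π * t))) • H.bracket e f := by
  have hee : H.bracket e e = 0 := by
    have h := H.bracket_skew e e
    have h1 : H.bracket e e + H.bracket e e = 0 := by
      nth_rewrite 1 [h]; abel
    have h2 : (2 : ℝ) • H.bracket e e = 0 := by rw [two_smul]; exact h1
    have := smul_eq_zero.mp h2
    simpa using this.resolve_left (by norm_num)
  have hff : H.bracket f f = 0 := by
    have h := H.bracket_skew f f
    have h1 : H.bracket f f + H.bracket f f = 0 := by
      nth_rewrite 1 [h]; abel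
    have h2 : (2 : ℝ) • H.bracket f f = 0 := by rw [two_smul]; exact h1
    have := smul_eq_zero.mp h2
    simpa using this.resolve_left (by norm_num)
  have hfe : H.bracket f e = -H.bracket e f := H.bracket_skew f e
  unfold cHor cHorD
  simp only [map_add, map_smul, ContinuousLinearMap.add_apply,
    ContinuousLinearMap.smul_apply, hee, hff, hfe, smul_zero, smul_neg]
  match_scalars
  linear_combination (2 * π * (R * r)) * Real.sin_sq_add_cos_sq (2 * π * t)

lemma loop_integrand_eq (H : HTypeGroup M) (p e f : M) (R r t : ℝ) :
    loopDeriv H p e f (H.bracket e f) R r t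
      - (2⁻¹ : ℝ) • H.bracket (loopFun H p e f (H.bracket e f) R r t)
          (loopDeriv H p e f (H.bracket e f) R r t)
      = cHorD e f R r t := by
  have hbr : H.bracket (loopFun H p e f (H.bracket e f) R r t)
      (loopDeriv H p e f (H.bracket e f) R r t)
      = H.bracket p (cHorD e f R r t) + H.bracket (cHor e f R r t) (cHorD e f R r t) := by
    have h1 : loopFun H p e f (H.bracket e f) R r t
        = (p + cHor e f R r t) + ((2⁻¹ : ℝ) • H.bracket p (cHor e f R r t)
          + (2⁻¹ * (R * r) * (2 * π * t - Real.sin (2 * π * t))) • H.bracket e f) := by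
      unfold loopFun; abel
    have h2 : loopDeriv H p e f (H.bracket e f) R r t
        = cHorD e f R r t + ((2⁻¹ : ℝ) • H.bracket p (cHorD e f R r t)
          + (2⁻¹ * (R * r) * (2 * π - Real.cos (2 * π * t) * (2 * π))) • H.bracket e f) := by
      unfold loopDeriv; abel
    rw [h1, h2, HT_bracket_reduce H
      (H.W.add_mem (H.W.smul_mem _ (H.bracket_mem_W _ _)) (H.W.smul_mem _ (H.bracket_mem_W _ _)))
      (H.W.add_mem (H.W.smul_mem _ (H.bracket_mem_W _ _)) (H.W.smul_mem _ (H.bracket_mem_W _ _)))]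
    rw [map_add, ContinuousLinearMap.add_apply]
  rw [hbr, bracket_cHor]
  unfold loopDeriv
  match_scalars <;> ring

noncomputable def loopCurve (H : HTypeGroup M) (p e f : M) (R r : ℝ) : PC1Curve M where
  toFun := loopFun H p e f (H.bracket e f) R r
  deriv := loopDeriv H p e f (H.bracket e f) R r
  continuousOn := (loopFun_continuous H p e f _ R r).continuousOn
  exc := ∅
  exc_finite := Set.finite_empty
  hasDeriv := fun t _ => loopFun_hasDeriv H p e f _ R r t
  deriv_integrable := (loopDeriv_continuous H p e f _ R r).intervalIntegrable 0 1

lemma loopCurve_length_le (H : HTypeGroup M) (σ : M → M → ℝ)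
    (h_bilin : ∀ v : M, IsLinearMap ℝ (σ v) ∧ IsLinearMap ℝ (fun w => σ w v))
    (h_symm : ∀ v w : M, σ v w = σ w v)
    (h_posdef : ∀ v : M, v ≠ 0 → 0 < σ v v)
    {c₀ : ℝ} (hc₀ : 0 < c₀) (h_cont : ∀ v : M, Real.sqrt (σ v v) ≤ c₀ * ‖v‖)
    (p e f : M) {R r : ℝ} (hR : 0 ≤ R) (hr : 0 ≤ r) :
    riemLength H σ (loopCurve H p e f R r)
      ≤ 2 * π * R * Real.sqrt (σ e e) + 2 * π * r * Real.sqrt (σ f f) := by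
  have h1 : riemLength H σ (loopCurve H p e f R r)
      = ∫ t in (0:ℝ)..1, Real.sqrt (σ (cHorD e f R r t) (cHorD e f R r t)) := by
    unfold riemLength
    apply intervalIntegral.integral_congr
    intro t _
    have := loop_integrand_eq H p e f R r t
    show Real.sqrt (σ ((loopCurve H p e f R r).deriv t
      - (2⁻¹ : ℝ) • H.bracket ((loopCurve H p e f R r).toFun t) ((loopCurve H p e f R r).deriv t)) _) = _
    rw [show (loopCurve H p e f R r).deriv t
      - (2⁻¹ : ℝ) • H.bracket ((loopCurve H p e f R r).toFun t) ((loopCurve H p e f R r).deriv t)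
      = cHorD e f R r t from this]
  rw [h1]
  have hint : IntervalIntegrable
      (fun t => Real.sqrt (σ (cHorD e f R r t) (cHorD e f R r t)))
      MeasureTheory.volume 0 1 :=
    (Real.continuous_sqrt.comp ((sig_diag_continuous σ h_bilin h_symm h_posdef hc₀ h_cont).comp
      (cHorD_continuous e f R r))).intervalIntegrable 0 1
  have hpt : ∀ t ∈ Set.Icc (0:ℝ) 1,
      Real.sqrt (σ (cHorD e f R r t) (cHorD e f R r t))
        ≤ 2 * π * R * Real.sqrt (σ e e) + 2 * π * r * Real.sqrt (σ f f) := by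
    intro t _
    have hc := sig_sqrt_combo σ h_bilin h_symm h_posdef
      (R * (Real.cos (2 * π * t) * (2 * π))) (r * (Real.sin (2 * π * t) * (2 * π))) e f
    unfold cHorD
    apply le_trans hc
    have ha : |R * (Real.cos (2 * π * t) * (2 * π))| ≤ 2 * π * R := by
      rw [abs_mul, abs_mul, abs_of_nonneg hR, abs_of_nonneg (by positivity : (0:ℝ) ≤ 2*π)]
      have h6 : |Real.cos (2 * π * t)| * (2 * π) ≤ 1 * (2 * π) :=
        mul_le_mul_of_nonneg_right (Real.abs_cos_le_one _) (by positivity)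
      have h7 := mul_le_mul_of_nonneg_left h6 hR
      linarith [h7]
    have hb : |r * (Real.sin (2 * π * t) * (2 * π))| ≤ 2 * π * r := by
      rw [abs_mul, abs_mul, abs_of_nonneg hr, abs_of_nonneg (by positivity : (0:ℝ) ≤ 2*π)]
      have h6 : |Real.sin (2 * π * t)| * (2 * π) ≤ 1 * (2 * π) :=
        mul_le_mul_of_nonneg_right (Real.abs_sin_le_one _) (by positivity)
      have h7 := mul_le_mul_of_nonneg_left h6 hr
      linarith [h7]
    have h3 := mul_le_mul_of_nonneg_right ha (Real.sqrt_nonneg (σ e e))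
    have h4 := mul_le_mul_of_nonneg_right hb (Real.sqrt_nonneg (σ f f))
    linarith
  calc ∫ t in (0:ℝ)..1, Real.sqrt (σ (cHorD e f R r t) (cHorD e f R r t))
      ≤ ∫ _ in (0:ℝ)..1, (2 * π * R * Real.sqrt (σ e e) + 2 * π * r * Real.sqrt (σ f f)) :=
        intervalIntegral.integral_mono_on zero_le_one hint intervalIntegrable_const hpt
    _ = 2 * π * R * Real.sqrt (σ e e) + 2 * π * r * Real.sqrt (σ f f) := by simp

end Construction
section Final
open Real
variable {M : Type*} [NormedAddCommGroup M] [InnerProductSpace ℝ M] [CompleteSpace M]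

noncomputable def constCurve (p : M) : PC1Curve M where
  toFun := fun _ => p
  deriv := fun _ => 0
  continuousOn := continuous_const.continuousOn
  exc := ∅
  exc_finite := Set.finite_empty
  hasDeriv := fun t _ => hasDerivAt_const t p
  deriv_integrable := intervalIntegrable_const

lemma constCurve_length (H : HTypeGroup M) (σ : M → M → ℝ)
    (h_bilin : ∀ v : M, IsLinearMap ℝ (σ v) ∧ IsLinearMap ℝ (fun w => σ w v)) (p : M) :
    riemLength H σ (constCurve p) = 0 := by
  unfold riemLength constCurve
  simp [sig_zero_right σ h_bilin]

noncomputable def lineCurve (p q : M) : PC1Curve M where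
  toFun := fun t => p + t • (q - p)
  deriv := fun _ => q - p
  continuousOn := (continuous_const.add (continuous_id.smul continuous_const)).continuousOn
  exc := ∅
  exc_finite := Set.finite_empty
  hasDeriv := fun t _ => by simpa using ((hasDerivAt_id t).smul_const (q - p)).const_add p
  deriv_integrable := intervalIntegrable_const

lemma lineCurve_zero (p q : M) : (lineCurve p q).toFun 0 = p := by
  show p + (0:ℝ) • (q - p) = p; simp

lemma lineCurve_one (p q : M) : (lineCurve p q).toFun 1 = q := by
  show p + (1:ℝ) • (q - p) = q; simp

lemma riemLength_nonneg (H : HTypeGroup M) (σ : M → M → ℝ) (γ : PC1Curve M) :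
    0 ≤ riemLength H σ γ :=
  intervalIntegral.integral_nonneg zero_le_one (fun _ _ => Real.sqrt_nonneg _)

lemma small_curve (H : HTypeGroup M) (σ : M → M → ℝ)
    (h_bilin : ∀ v : M, IsLinearMap ℝ (σ v) ∧ IsLinearMap ℝ (fun w => σ w v))
    (h_symm : ∀ v w : M, σ v w = σ w v)
    (h_posdef : ∀ v : M, v ≠ 0 → 0 < σ v v)
    {c₀ : ℝ} (hc₀ : 0 < c₀) (h_cont : ∀ v : M, Real.sqrt (σ v v) ≤ c₀ * ‖v‖)
    {C : ℝ} (hC : 0 < C)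
    (h_proj : ∀ v : M, Real.sqrt (σ (H.proj1 v) (H.proj1 v)) ≤ C * Real.sqrt (σ v v) ∧
        Real.sqrt (σ (H.proj2 v) (H.proj2 v)) ≤ C * Real.sqrt (σ v v))
    (h_strictly_weak : ¬ ∃ c > (0 : ℝ), ∀ v : M, c * ‖v‖ ≤ Real.sqrt (σ v v))
    (p : M) {z : M} (hz : z ∈ H.W) :
    ∀ ε > (0:ℝ), ∃ γ : PC1Curve M,
      γ.toFun 0 = p ∧ γ.toFun 1 = p + z ∧ riemLength H σ γ < ε := by
  intro ε hε
  rcases eq_or_ne z 0 with rfl | hz0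
  · refine ⟨constCurve p, rfl, by simp [constCurve], ?_⟩
    rw [constCurve_length H σ h_bilin]
    exact hε
  · have hnz : 0 < ‖z‖ := norm_pos_iff.mpr hz0
    set A := c₀ * ‖z‖ with hA_def
    have hA : 0 < A := by positivity
    set δ := ε ^ 2 / (64 * π * A + 1) with hδ_def
    have hδ : 0 < δ := by positivity
    obtain ⟨e, heV, he0, hse⟩ := cheap_direction H σ h_bilin h_symm h_posdef hc₀ h_cont hC
      h_proj h_strictly_weak δ hδ
    have hne : 0 < ‖e‖ := norm_pos_iff.mpr he0
    set s := Real.sqrt (σ e e) with hs_def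
    have hs : 0 < s := Real.sqrt_pos.mpr (h_posdef e he0)
    set f := H.Jmap z e with hf_def
    set R := ε / (8 * π * s) with hR_def
    have hRpos : 0 < R := by positivity
    set r := 1 / (π * R * ‖e‖ ^ 2) with hr_def
    have hrpos : 0 < r := by positivity
    refine ⟨loopCurve H p e f R r, loopFun_zero H p e f _ R r, ?_, ?_⟩
    · show loopFun H p e f (H.bracket e f) R r 1 = p + z
      rw [loopFun_one]
      have hbef : H.bracket e f = (‖e‖ ^ 2) • z := HT_bracket_J H hz heV
      rw [hbef, smul_smul]
      have h1 : π * (R * r) * ‖e‖ ^ 2 = 1 := by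
        rw [hr_def]; field_simp
      rw [h1, one_smul]
    · have hlen := loopCurve_length_le H σ h_bilin h_symm h_posdef hc₀ h_cont p e f
        hRpos.le hrpos.le
      have hsf : Real.sqrt (σ f f) ≤ A * ‖e‖ := by
        calc Real.sqrt (σ f f) ≤ c₀ * ‖f‖ := h_cont f
          _ = A * ‖e‖ := by rw [hf_def, HT_norm_J H hz heV, hA_def]; ring
      have hterm1 : 2 * π * R * s = ε / 4 := by
        rw [hR_def]; field_simp; ring
      have hterm2 : 2 * π * r * (A * ‖e‖) < ε / 4 := by
        have heq1 : 2 * π * r * (A * ‖e‖) = 2 * A / (R * ‖e‖) := by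
          rw [hr_def]; field_simp
        have heq2 : 2 * A / (R * ‖e‖) = 16 * π * s * A / (ε * ‖e‖) := by
          rw [hR_def]; field_simp; ring
        have hineq : 16 * π * s * A / (ε * ‖e‖) ≤ 16 * π * (δ * ‖e‖) * A / (ε * ‖e‖) := by
          gcongr
        have heq3 : 16 * π * (δ * ‖e‖) * A / (ε * ‖e‖) = 16 * π * δ * A / ε := by
          field_simp
        have hfin : 16 * π * δ * A / ε < ε / 4 := by
          have hB : (0:ℝ) < 64 * π * A + 1 := by positivity
          have heq4 : 16 * π * δ * A / ε = 16 * π * A * ε / (64 * π * A + 1) := by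
            rw [hδ_def]; field_simp
          rw [heq4, div_lt_iff₀ hB]
          nlinarith [hε, Real.pi_pos, hA]
        rw [heq1, heq2]
        calc 16 * π * s * A / (ε * ‖e‖) ≤ 16 * π * (δ * ‖e‖) * A / (ε * ‖e‖) := hineq
          _ = 16 * π * δ * A / ε := heq3
          _ < ε / 4 := hfin
      have h5 : 2 * π * r * Real.sqrt (σ f f) ≤ 2 * π * r * (A * ‖e‖) :=
        mul_le_mul_of_nonneg_left hsf (by positivity)
      calc riemLength H σ (loopCurve H p e f R r)
          ≤ 2 * π * R * s + 2 * π * r * Real.sqrt (σ f f) := hlen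
        _ ≤ ε / 4 + 2 * π * r * (A * ‖e‖) := by rw [hterm1] at *; linarith
        _ < ε / 4 + ε / 4 := by linarith
        _ ≤ ε := by linarith

end Final
/-- For a strictly weak, left invariant Riemannian metric `σ₀` on a
Hilbertian H-type group `M = V ⊕ W`, for all `x, y ∈ V` and `z₁, z₂ ∈ W` one has
`d_σ(x + z₁, y + z₂) = 0` if and only if `x = y`. -/
theorem statement_11 {M : Type*} [NormedAddCommGroup M] [InnerProductSpace ℝ M]
    [CompleteSpace M] (H : HTypeGroup M) (σ : M → M → ℝ)
    (h_bilin : ∀ v : M, IsLinearMap ℝ (σ v) ∧ IsLinearMap ℝ (fun w => σ w v))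
    (h_symm : ∀ v w : M, σ v w = σ w v)
    (h_posdef : ∀ v : M, v ≠ 0 → 0 < σ v v)
    (c₀ : ℝ) (hc₀ : 0 < c₀)
    (h_cont : ∀ v : M, Real.sqrt (σ v v) ≤ c₀ * ‖v‖)
    (C : ℝ) (hC : 0 < C)
    (h_proj : ∀ v : M, Real.sqrt (σ (H.proj1 v) (H.proj1 v)) ≤ C * Real.sqrt (σ v v) ∧
        Real.sqrt (σ (H.proj2 v) (H.proj2 v)) ≤ C * Real.sqrt (σ v v))
    (h_strictly_weak : ¬ ∃ c > (0 : ℝ), ∀ v : M, c * ‖v‖ ≤ Real.sqrt (σ v v)) :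
    ∀ x ∈ H.V, ∀ y ∈ H.V, ∀ z₁ ∈ H.W, ∀ z₂ ∈ H.W,
      (riemDist H σ (x + z₁) (y + z₂) = 0 ↔ x = y) := by
  intro x hx y hy z₁ hz₁ z₂ hz₂
  set S := {L : ℝ | ∃ γ : PC1Curve M,
    γ.toFun 0 = x + z₁ ∧ γ.toFun 1 = y + z₂ ∧ L = riemLength H σ γ} with hS_def
  have hSd : riemDist H σ (x + z₁) (y + z₂) = sInf S := rfl
  have hSne : S.Nonempty :=
    ⟨riemLength H σ (lineCurve (x + z₁) (y + z₂)),
      lineCurve (x + z₁) (y + z₂), lineCurve_zero _ _, lineCurve_one _ _, rfl⟩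
  have hSnn : ∀ L ∈ S, (0:ℝ) ≤ L := by
    rintro L ⟨γ, -, -, rfl⟩
    exact riemLength_nonneg H σ γ
  have hbdd : BddBelow S := ⟨0, hSnn⟩
  constructor
  · intro hd
    by_contra hxy
    have hδ0 : 0 < Real.sqrt (σ (x - y) (x - y)) / C :=
      div_pos (Real.sqrt_pos.mpr (h_posdef _ (sub_ne_zero.mpr hxy))) hC
    have hlb : ∀ L ∈ S, Real.sqrt (σ (x - y) (x - y)) / C ≤ L := by
      rintro L ⟨γ, hγ0, hγ1, rfl⟩
      exact length_lower_bound H σ h_bilin h_symm h_posdef hc₀ h_cont hC h_proj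
        hx hy hz₁ hz₂ hxy γ hγ0 hγ1
    have := le_csInf hSne hlb
    rw [← hSd, hd] at this
    linarith
  · intro hxy
    subst hxy
    rw [hSd]
    apply le_antisymm
    · by_contra hpos
      push_neg at hpos
      obtain ⟨γ, hγ0, hγ1, hγlen⟩ := small_curve H σ h_bilin h_symm h_posdef hc₀ h_cont hC
        h_proj h_strictly_weak (x + z₁) (H.W.sub_mem hz₂ hz₁) (sInf S) hpos
      have hmem : riemLength H σ γ ∈ S := by
        refine ⟨γ, hγ0, ?_, rfl⟩
        rw [hγ1]; abel
      have := csInf_le hbdd hmem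
      linarith
    · exact le_csInf hSne hSnn
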